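/- Soundness of the tableau: if an LTL formula φ has a successful tableau (i.e. a tableau for φ, built according to the rules, containing at least one ticked leaf), then φ is satisfiable, i.e. there exists an ω-word σ : ℕ → Set AP with σ ⊨ φ. -/

import Mathlib

/-- LTL formulas over atomic propositions `AP`, built from atoms using
negation, conjunction, next (X) and until (U). -/
inductive LTL (AP : Type) : Type
  | atom : AP → LTL AP
  | neg : LTL AP → LTL AP
  | and : LTL AP → LTL AP → LTL AP
  | next : LTL AP → LTL AP
  | until_ : LTL AP → LTL AP → LTL AP
  deriving DecidableEq

namespace LTL

variable {AP : Type}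

/-- The shifted ω-word `σ_{≥i}`. -/
def shift (σ : ℕ → Set AP) (i : ℕ) : ℕ → Set AP := fun j => σ (i + j)

/-- Satisfaction of an LTL formula on an ω-word. -/
def Sat : (ℕ → Set AP) → LTL AP → Prop
  | σ, atom p => p ∈ σ 0
  | σ, neg α => ¬ Sat σ α
  | σ, and α β => Sat σ α ∧ Sat σ β
  | σ, next α => Sat (shift σ 1) α
  | σ, until_ α β => ∃ i, Sat (shift σ i) β ∧ ∀ j < i, Sat (shift σ j) α

/-- A formula is satisfiable iff some ω-word satisfies it. -/
def Satisfiable (φ : LTL AP) : Prop := ∃ σ : ℕ → Set AP, Sat σ φ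

/-- Standard abbreviations. -/
def or' (α β : LTL AP) : LTL AP := neg ((neg α).and (neg β))
def imp (α β : LTL AP) : LTL AP := or' (neg α) β
def iff' (α β : LTL AP) : LTL AP := (imp α β).and (imp β α)
/-- `⊤ ≡ p ∨ ¬p`. -/
def top (p : AP) : LTL AP := or' (atom p) (neg (atom p))
/-- `⊥ ≡ ¬⊤`. -/
def bot (p : AP) : LTL AP := neg (top p)
/-- `F α ≡ ⊤ U α`. -/
def F (p : AP) (α : LTL AP) : LTL AP := (top p).until_ α
/-- `G α ≡ ¬F¬α`. -/
def G (p : AP) (α : LTL AP) : LTL AP := neg (F p (neg α))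

/-- Elementary formulas: atoms, negated atoms, `Xα` and `¬Xα`. -/
def Elementary : LTL AP → Prop
  | atom _ => True
  | neg (atom _) => True
  | next _ => True
  | neg (next _) => True
  | _ => False

/-- A finite set of formulas is poised when it is nonempty, contains no direct
contradiction, and all of its members are elementary. -/
def Poised (Γ : Finset (LTL AP)) : Prop :=
  Γ.Nonempty ∧ (∀ α : LTL AP, ¬(α ∈ Γ ∧ neg α ∈ Γ)) ∧ ∀ ψ ∈ Γ, Elementary ψ

/-- The label of the TRANSITION child: `{α : Xα ∈ Γ} ∪ {¬α : ¬Xα ∈ Γ}`. -/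
def nextLabel [DecidableEq AP] (Γ : Finset (LTL AP)) : Finset (LTL AP) :=
  Γ.biUnion fun ψ =>
    match ψ with
    | next α => {α}
    | neg (next α) => {neg α}
    | _ => (∅ : Finset (LTL AP))

/-- Static rules with one child (consuming the decomposed formula). -/
inductive Static1 [DecidableEq AP] : Finset (LTL AP) → Finset (LTL AP) → Prop
  | conj (α β : LTL AP) (Δ : Finset (LTL AP)) (h : α.and β ∉ Δ) :
      Static1 (insert (α.and β) Δ) (insert α (insert β Δ))
  | negneg (α : LTL AP) (Δ : Finset (LTL AP)) (h : neg (neg α) ∉ Δ) :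
      Static1 (insert (neg (neg α)) Δ) (insert α Δ)

/-- Static rules with two children (consuming the decomposed formula). -/
inductive Static2 [DecidableEq AP] :
    Finset (LTL AP) → Finset (LTL AP) → Finset (LTL AP) → Prop
  | negconj (α β : LTL AP) (Δ : Finset (LTL AP)) (h : neg (α.and β) ∉ Δ) :
      Static2 (insert (neg (α.and β)) Δ) (insert (neg α) Δ) (insert (neg β) Δ)
  | untl (α β : LTL AP) (Δ : Finset (LTL AP)) (h : α.until_ β ∉ Δ) :
      Static2 (insert (α.until_ β) Δ) (insert β Δ)
        (insert α (insert (next (α.until_ β)) Δ))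
  | neguntl (α β : LTL AP) (Δ : Finset (LTL AP)) (h : neg (α.until_ β) ∉ Δ) :
      Static2 (insert (neg (α.until_ β)) Δ)
        (insert (neg α) (insert (neg β) Δ))
        (insert (neg β) (insert (next (neg (α.until_ β))) Δ))

/-- Label at position `i` of a list of labels (default `∅`). -/
def labelAt (L : List (Finset (LTL AP))) (i : ℕ) : Finset (LTL AP) := L.getD i ∅

/-- LOOP rule condition for a node labelled `Γ` whose list of proper-ancestor
labels (root first) is `anc`: some poised proper ancestor `u` has
`Γ_u ⊇ Γ`, and every X-eventuality `X(αUβ)` of `Γ_u` is fulfilled by some node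
`w` with `u < w ≤ v` (`v` being the current node, of index `anc.length`). -/
def LoopCond (anc : List (Finset (LTL AP))) (Γ : Finset (LTL AP)) : Prop :=
  ∃ u < anc.length, Poised (labelAt anc u) ∧ Γ ⊆ labelAt anc u ∧
    ∀ α β : LTL AP, next (α.until_ β) ∈ labelAt anc u →
      ∃ w, u < w ∧ w ≤ anc.length ∧ β ∈ labelAt (anc ++ [Γ]) w

/-- PRUNE rule condition: `u < v < w` all bear the same poised label `Γ`
(`w` the current node) and every X-eventuality of `Γ` fulfilled in `(v,w]` is
also fulfilled in `(u,v]`. -/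
def PruneCond (anc : List (Finset (LTL AP))) (Γ : Finset (LTL AP)) : Prop :=
  ∃ u v, u < v ∧ v < anc.length ∧ labelAt anc u = Γ ∧ labelAt anc v = Γ ∧
    ∀ α β : LTL AP, next (α.until_ β) ∈ Γ →
      (∃ x, v < x ∧ x ≤ anc.length ∧ β ∈ labelAt (anc ++ [Γ]) x) →
      (∃ y, u < y ∧ y ≤ v ∧ β ∈ labelAt anc y)

/-- PRUNE₀ rule condition: some proper ancestor `u` has the same poised label
`Γ` as the current node `v`, `Γ` contains at least one X-eventuality and no
X-eventuality of `Γ` is fulfilled in `(u,v]`. -/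
def Prune0Cond (anc : List (Finset (LTL AP))) (Γ : Finset (LTL AP)) : Prop :=
  ∃ u < anc.length, labelAt anc u = Γ ∧
    (∃ α β : LTL AP, next (α.until_ β) ∈ Γ) ∧
    ∀ α β : LTL AP, next (α.until_ β) ∈ Γ →
      ¬ ∃ x, u < x ∧ x ≤ anc.length ∧ β ∈ labelAt (anc ++ [Γ]) x

end LTL

open LTL in
/-- Tableau trees: ticked leaves, crossed leaves, unfinished leaves and inner
nodes with one or two children; every node carries a finite set of formulas. -/
inductive Tab (AP : Type) : Type
  | tick : Finset (LTL AP) → Tab AP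
  | cross : Finset (LTL AP) → Tab AP
  | unfin : Finset (LTL AP) → Tab AP
  | node1 : Finset (LTL AP) → Tab AP → Tab AP
  | node2 : Finset (LTL AP) → Tab AP → Tab AP → Tab AP

namespace Tab

variable {AP : Type}

def label : Tab AP → Finset (LTL AP)
  | tick Γ => Γ
  | cross Γ => Γ
  | unfin Γ => Γ
  | node1 Γ _ => Γ
  | node2 Γ _ _ => Γ

/-- A tableau is finished when every leaf is ticked or crossed. -/
def Finished : Tab AP → Prop
  | tick _ => True
  | cross _ => True
  | unfin _ => False
  | node1 _ t => t.Finished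
  | node2 _ t₁ t₂ => t₁.Finished ∧ t₂.Finished

/-- A tableau is successful when it has at least one ticked leaf. -/
def Successful : Tab AP → Prop
  | tick _ => True
  | cross _ => False
  | unfin _ => False
  | node1 _ t => t.Successful
  | node2 _ t₁ t₂ => t₁.Successful ∨ t₂.Successful

end Tab

open LTL in
/-- `Valid anc t` : the tree `t` is built according to the tableau rules, where
`anc` is the list of labels of the proper ancestors of the root of `t`
(root of the whole tableau first). -/
inductive Valid {AP : Type} [DecidableEq AP] :
    List (Finset (LTL AP)) → Tab AP → Prop
  | empty (anc) : Valid anc (Tab.tick (∅ : Finset (LTL AP)))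
  | contra (anc) (Γ : Finset (LTL AP)) (α : LTL AP)
      (h1 : α ∈ Γ) (h2 : LTL.neg α ∈ Γ) : Valid anc (Tab.cross Γ)
  | unfin (anc) (Γ : Finset (LTL AP)) : Valid anc (Tab.unfin Γ)
  | static1 (anc) (Γ : Finset (LTL AP)) (t : Tab AP)
      (h : Static1 Γ t.label) (hv : Valid (anc ++ [Γ]) t) :
      Valid anc (Tab.node1 Γ t)
  | static2 (anc) (Γ : Finset (LTL AP)) (t₁ t₂ : Tab AP)
      (h : Static2 Γ t₁.label t₂.label)
      (hv₁ : Valid (anc ++ [Γ]) t₁) (hv₂ : Valid (anc ++ [Γ]) t₂) :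
      Valid anc (Tab.node2 Γ t₁ t₂)
  | loop (anc) (Γ : Finset (LTL AP)) (hp : Poised Γ) (h : LoopCond anc Γ) :
      Valid anc (Tab.tick Γ)
  | prune (anc) (Γ : Finset (LTL AP)) (hp : Poised Γ) (h : PruneCond anc Γ) :
      Valid anc (Tab.cross Γ)
  | prune0 (anc) (Γ : Finset (LTL AP)) (hp : Poised Γ) (h : Prune0Cond anc Γ) :
      Valid anc (Tab.cross Γ)
  | transition (anc) (Γ : Finset (LTL AP)) (t : Tab AP) (hp : Poised Γ)
      (hl : ¬ LoopCond anc Γ) (hpr : ¬ PruneCond anc Γ)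
      (hp0 : ¬ Prune0Cond anc Γ)
      (h : t.label = nextLabel Γ) (hv : Valid (anc ++ [Γ]) t) :
      Valid anc (Tab.node1 Γ t)

/-- `T` is a tableau for `φ`: root labelled `{φ}` and built by the rules. -/
def IsTableauFor {AP : Type} [DecidableEq AP] (φ : LTL AP) (T : Tab AP) : Prop :=
  T.label = {φ} ∧ Valid [] T

open LTL in
/-- A node must be made a leaf whenever EMPTY, CONTRADICTION, LOOP, PRUNE or
PRUNE₀ applies to it. -/
def ForcedLeaf {AP : Type} [DecidableEq AP]
    (anc : List (Finset (LTL AP))) (Γ : Finset (LTL AP)) : Prop :=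
  Γ = ∅ ∨ (∃ α : LTL AP, α ∈ Γ ∧ LTL.neg α ∈ Γ) ∨
    (Poised Γ ∧ (LoopCond anc Γ ∨ PruneCond anc Γ ∨ Prune0Cond anc Γ))

open LTL in
/-- One step of branch construction: from a node labelled `Γ` with proper
ancestor labels `anc` (root first), which is not forced to be a leaf, to a
child labelled `Δ` obtained by a static rule or by TRANSITION. -/
def BranchStep {AP : Type} [DecidableEq AP]
    (anc : List (Finset (LTL AP))) (Γ Δ : Finset (LTL AP)) : Prop :=
  ¬ ForcedLeaf anc Γ ∧
    (Static1 Γ Δ ∨ (∃ Δ', Static2 Γ Δ Δ') ∨ (∃ Δ', Static2 Γ Δ' Δ) ∨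
      (Poised Γ ∧ Δ = nextLabel Γ))

namespace LTL

/-- `seg Γ a b = ⋃ { Γ s : a ≤ s ≤ b }`. -/
def seg {AP : Type} (Γ : ℕ → Finset (LTL AP)) (a b : ℕ) : Set (LTL AP) :=
  {ψ | ∃ s, a ≤ s ∧ s ≤ b ∧ ψ ∈ Γ s}

end LTL

open LTL in
/-- A branch `x_0, …, x_n` of a tableau for `φ` ending in a tick via EMPTY or
LOOP, described by its sequence of labels `Γ`, with `j 0 < … < j (k-1)` the
indices at which the TRANSITION rule is applied, and, in the LOOP case, `l`
the index such that `x_{j l}` is the matching poised ancestor. -/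
structure TickedBranch (AP : Type) [DecidableEq AP] (φ : LTL AP) where
  n : ℕ
  Γ : ℕ → Finset (LTL AP)
  k : ℕ
  j : ℕ → ℕ
  viaEmpty : Bool
  l : ℕ
  root : Γ 0 = {φ}
  jmono : ∀ ⦃a b : ℕ⦄, a < b → b < k → j a < j b
  jlt : ∀ i < k, j i < n
  trans_step : ∀ i < k, Poised (Γ (j i)) ∧ Γ (j i + 1) = nextLabel (Γ (j i))
  static_step : ∀ s < n, (¬ ∃ i < k, j i = s) →
    Static1 (Γ s) (Γ (s + 1)) ∨ (∃ Δ', Static2 (Γ s) (Γ (s + 1)) Δ') ∨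
      (∃ Δ', Static2 (Γ s) Δ' (Γ (s + 1)))
  /-- in the EMPTY case we set `j k = n` -/
  jk : viaEmpty = true → j k = n
  empty_end : viaEmpty = true → Γ n = ∅
  loop_end : viaEmpty = false → l < k ∧ Poised (Γ n) ∧ Γ n ⊆ Γ (j l) ∧
    ∀ α β : LTL AP, LTL.next (α.until_ β) ∈ Γ (j l) →
      ∃ w, j l < w ∧ w ≤ n ∧ β ∈ Γ w

namespace TickedBranch

open LTL

variable {AP : Type} [DecidableEq AP] {φ : LTL AP}

/-- `N = k - 1` in the EMPTY case, `N = l` in the LOOP case. -/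
def N (b : TickedBranch AP φ) : ℕ := if b.viaEmpty then b.k - 1 else b.l

/-- `M = 1` in the EMPTY case, `M = k - l` in the LOOP case. -/
def M (b : TickedBranch AP φ) : ℕ := if b.viaEmpty then 1 else b.k - b.l

/-- `Δ_i` for `0 ≤ i ≤ N + M - 1` : the union of the labels strictly after the
`(i-1)`-th TRANSITION up to the `i`-th one (reading `j_{-1} = -1`), where
`Δ_N` additionally collects the labels strictly after the `(k-1)`-th
TRANSITION up to the end `n` of the branch. -/
def deltaBase (b : TickedBranch AP φ) (i : ℕ) : Set (LTL AP) :=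
  if i = b.N then
    seg b.Γ (if b.N = 0 then 0 else b.j (b.N - 1) + 1) (b.j b.N) ∪
      seg b.Γ (b.j (b.k - 1) + 1) b.n
  else if i = 0 then seg b.Γ 0 (b.j 0)
  else seg b.Γ (b.j (i - 1) + 1) (b.j i)

/-- The state-label sequence `(Δ_i)_{i ≥ 0}` extracted from the branch:
for `i ≥ N + M`, `Δ_i = Δ_{(i-N) mod M + N}`. -/
def delta (b : TickedBranch AP φ) (i : ℕ) : Set (LTL AP) :=
  if i < b.N + b.M then b.deltaBase i else b.deltaBase ((i - b.N) % b.M + b.N)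

end TickedBranch

namespace LTL

/-- Length of a formula: number of nodes of its syntax tree. -/
def length {AP : Type} : LTL AP → ℕ
  | atom _ => 1
  | neg α => α.length + 1
  | and α β => α.length + β.length + 1
  | next α => α.length + 1
  | until_ α β => α.length + β.length + 1

/-- The set of subformulas of a formula. -/
def subf {AP : Type} [DecidableEq AP] : LTL AP → Finset (LTL AP)
  | atom p => {atom p}
  | neg α => insert (neg α) α.subf
  | and α β => insert (α.and β) (α.subf ∪ β.subf)
  | next α => insert (next α) α.subf
  | until_ α β => insert (α.until_ β) (α.subf ∪ β.subf)

/-- The closure set of `φ` :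
`{ψ, ¬ψ : ψ ≤ φ} ∪ {X(αUβ), ¬X(αUβ) : αUβ ≤ φ}`. -/
def closure {AP : Type} [DecidableEq AP] (φ : LTL AP) : Finset (LTL AP) :=
  φ.subf ∪ φ.subf.image neg ∪
    φ.subf.biUnion fun ψ =>
      match ψ with
      | until_ α β => {next (α.until_ β), neg (next (α.until_ β))}
      | _ => (∅ : Finset (LTL AP))

/-- Right-nested conjunction of a nonempty list of conjuncts. -/
def conjAll {AP : Type} : LTL AP → List (LTL AP) → LTL AP
  | γ, [] => γ
  | γ, c :: t => γ.and (conjAll c t)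

end LTL

open LTL

namespace Sound

variable {AP : Type} [DecidableEq AP]

lemma one_le_length (ψ : LTL AP) : 1 ≤ ψ.length := by
  cases ψ <;> simp [LTL.length]

/-- One-step decomposition relation. -/
def Dec1 (ψ : LTL AP) (S : Set (LTL AP)) : Prop :=
  match ψ with
  | .and α β => α ∈ S ∧ β ∈ S
  | .neg (.neg α) => α ∈ S
  | .neg (.and α β) => LTL.neg α ∈ S ∨ LTL.neg β ∈ S
  | .until_ α β => β ∈ S ∨ (α ∈ S ∧ LTL.next (α.until_ β) ∈ S)
  | .neg (.until_ α β) =>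
      (LTL.neg α ∈ S ∧ LTL.neg β ∈ S) ∨
        (LTL.neg β ∈ S ∧ LTL.next (LTL.neg (α.until_ β)) ∈ S)
  | _ => False

lemma Dec1_mono {S S' : Set (LTL AP)} (h : S ⊆ S') : ∀ ψ, Dec1 ψ S → Dec1 ψ S' := by
  intro ψ hd
  match ψ with
  | .atom p => exact hd.elim
  | .and α β => exact ⟨h hd.1, h hd.2⟩
  | .next α => exact hd.elim
  | .until_ α β => exact hd.imp (fun x => h x) (fun x => ⟨h x.1, h x.2⟩)
  | .neg (.atom p) => exact hd.elim
  | .neg (.neg α) => exact h hd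
  | .neg (.and α β) => exact hd.imp (fun x => h x) (fun x => h x)
  | .neg (.next α) => exact hd.elim
  | .neg (.until_ α β) =>
      exact hd.imp (fun x => ⟨h x.1, h x.2⟩) (fun x => ⟨h x.1, h x.2⟩)

/-- abbreviation: a static child. -/
def SChild (G D : Finset (LTL AP)) : Prop :=
  Static1 G D ∨ (∃ D', Static2 G D D') ∨ (∃ D', Static2 G D' D)

lemma static1_not_poised {G D : Finset (LTL AP)} (h : Static1 G D) : ¬ Poised G := by
  rintro ⟨-, -, helem⟩
  cases h with
  | conj α β Δ h => simpa [Elementary] using helem _ (Finset.mem_insert_self _ _)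
  | negneg α Δ h => simpa [Elementary] using helem _ (Finset.mem_insert_self _ _)

lemma static2_not_poised {G D D' : Finset (LTL AP)} (h : Static2 G D D') : ¬ Poised G := by
  rintro ⟨-, -, helem⟩
  cases h with
  | negconj α β Δ h => simpa [Elementary] using helem _ (Finset.mem_insert_self _ _)
  | untl α β Δ h => simpa [Elementary] using helem _ (Finset.mem_insert_self _ _)
  | neguntl α β Δ h => simpa [Elementary] using helem _ (Finset.mem_insert_self _ _)

lemma schild_not_poised {G D : Finset (LTL AP)} (h : SChild G D) : ¬ Poised G := by
  rcases h with h | ⟨D', h⟩ | ⟨D', h⟩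
  · exact static1_not_poised h
  · exact static2_not_poised h
  · exact static2_not_poised h

lemma step1 {G D : Finset (LTL AP)} (h : SChild G D) :
    ∀ ψ ∈ G, ψ ∈ D ∨ Dec1 ψ (↑D : Set (LTL AP)) := by
  intro ψ hψ
  rcases h with h | ⟨D', h⟩ | ⟨D', h⟩
  · cases h with
    | conj α β Δ h =>
        rcases Finset.mem_insert.1 hψ with rfl | h'
        · right; exact ⟨by simp, by simp⟩
        · left; simp [h']
    | negneg α Δ h =>
        rcases Finset.mem_insert.1 hψ with rfl | h'
        · right; simp [Dec1]
        · left; simp [h']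
  · cases h with
    | negconj α β Δ h =>
        rcases Finset.mem_insert.1 hψ with rfl | h'
        · right; left; simp
        · left; simp [h']
    | untl α β Δ h =>
        rcases Finset.mem_insert.1 hψ with rfl | h'
        · right; left; simp
        · left; simp [h']
    | neguntl α β Δ h =>
        rcases Finset.mem_insert.1 hψ with rfl | h'
        · right; left; exact ⟨by simp, by simp⟩
        · left; simp [h']
  · cases h with
    | negconj α β Δ h =>
        rcases Finset.mem_insert.1 hψ with rfl | h'
        · right; right; simp
        · left; simp [h']
    | untl α β Δ h =>
        rcases Finset.mem_insert.1 hψ with rfl | h'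
        · right; right; exact ⟨by simp, by simp⟩
        · left; simp [h']
    | neguntl α β Δ h =>
        rcases Finset.mem_insert.1 hψ with rfl | h'
        · right; right; exact ⟨by simp, by simp⟩
        · left; simp [h']

lemma elem_step {G D : Finset (LTL AP)} (h : SChild G D) :
    ∀ ψ ∈ G, Elementary ψ → ψ ∈ D := by
  intro ψ hψ he
  rcases h with h | ⟨D', h⟩ | ⟨D', h⟩ <;> cases h <;>
    rcases Finset.mem_insert.1 hψ with rfl | h' <;>
      first
        | (exfalso; simpa [Elementary] using he)
        | simp [h']

end Sound

namespace Sound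

set_option linter.unusedSectionVars false

/-- Abstract infinite rule-respecting sequence of labels. -/
structure PM (AP : Type) [DecidableEq AP] where
  Λ : ℕ → Finset (LTL AP)
  isT : ℕ → Prop
  elem : ∀ s, isT s → ∀ ψ ∈ Λ s, Elementary ψ
  noCon : ∀ s, isT s → ∀ α : LTL AP, ¬(α ∈ Λ s ∧ LTL.neg α ∈ Λ s)
  tnext : ∀ s, isT s → ∀ α : LTL AP, LTL.next α ∈ Λ s → α ∈ Λ (s+1)
  tnegnext : ∀ s, isT s → ∀ α : LTL AP, LTL.neg (LTL.next α) ∈ Λ s → LTL.neg α ∈ Λ (s+1)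
  stat : ∀ s, ¬ isT s → SChild (Λ s) (Λ (s+1))
  inf : ∀ s, ∃ t, s ≤ t ∧ isT t

namespace PM

open Classical

variable {AP : Type} [DecidableEq AP] (M : PM AP)

noncomputable def nt (s : ℕ) : ℕ := Nat.find (M.inf s)

lemma le_nt (s : ℕ) : s ≤ M.nt s := by
  have := Nat.find_spec (M.inf s); exact this.1

lemma isT_nt (s : ℕ) : M.isT (M.nt s) := (Nat.find_spec (M.inf s)).2

lemma nt_min {s t : ℕ} (h1 : s ≤ t) (h2 : M.isT t) : M.nt s ≤ t :=
  Nat.find_min' (M.inf s) ⟨h1, h2⟩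

lemma nt_eq_self {s : ℕ} (h : M.isT s) : M.nt s = s :=
  le_antisymm (M.nt_min le_rfl h) (M.le_nt s)

lemma lt_nt {s : ℕ} (h : ¬ M.isT s) : s < M.nt s := by
  rcases (M.le_nt s).lt_or_eq with h' | h'
  · exact h'
  · exact absurd (h' ▸ M.isT_nt s) h

lemma nt_succ {s : ℕ} (h : ¬ M.isT s) : M.nt (s+1) = M.nt s := by
  have h1 : s + 1 ≤ M.nt s := M.lt_nt h
  refine le_antisymm (M.nt_min h1 (M.isT_nt s)) (M.nt_min ?_ (M.isT_nt (s+1)))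
  exact le_trans (Nat.le_succ s) (M.le_nt (s+1))

lemma persist_aux : ∀ d s (ψ : LTL AP), M.nt s - s ≤ d → Elementary ψ →
    ψ ∈ M.Λ s → ψ ∈ M.Λ (M.nt s) := by
  intro d
  induction d with
  | zero =>
      intro s ψ hd he hψ
      have : M.nt s = s := by have := M.le_nt s; omega
      rwa [this]
  | succ d ih =>
      intro s ψ hd he hψ
      by_cases h : M.isT s
      · rwa [M.nt_eq_self h]
      · have hst := M.stat s h
        have hψ' : ψ ∈ M.Λ (s+1) := elem_step hst ψ hψ he
        have hlt : s + 1 ≤ M.nt s := M.lt_nt h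
        have heq : M.nt (s+1) = M.nt s := M.nt_succ h
        have := ih (s+1) ψ (by omega) he hψ'
        rwa [heq] at this

lemma persist {s : ℕ} {ψ : LTL AP} (he : Elementary ψ) (hψ : ψ ∈ M.Λ s) :
    ψ ∈ M.Λ (M.nt s) := M.persist_aux (M.nt s - s) s ψ le_rfl he hψ

lemma decomp_aux : ∀ d s (ψ : LTL AP), M.nt s - s ≤ d → ¬ Elementary ψ →
    ψ ∈ M.Λ s → ∃ s', s ≤ s' ∧ s' + 1 ≤ M.nt s ∧ Dec1 ψ (↑(M.Λ (s'+1)) : Set (LTL AP)) := by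
  intro d
  induction d with
  | zero =>
      intro s ψ hd he hψ
      have hns : M.nt s = s := by have := M.le_nt s; omega
      exact absurd (M.elem s (hns ▸ M.isT_nt s) ψ hψ) he
  | succ d ih =>
      intro s ψ hd he hψ
      by_cases h : M.isT s
      · exact absurd (M.elem s h ψ hψ) he
      · have hst := M.stat s h
        have hlt : s + 1 ≤ M.nt s := M.lt_nt h
        rcases step1 hst ψ hψ with h' | h'
        · have heq : M.nt (s+1) = M.nt s := M.nt_succ h
          obtain ⟨s', h1, h2, h3⟩ := ih (s+1) ψ (by omega) he h'
          exact ⟨s', by omega, by omega, h3⟩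
        · exact ⟨s, le_rfl, hlt, h'⟩

lemma decomp {s : ℕ} {ψ : LTL AP} (he : ¬ Elementary ψ) (hψ : ψ ∈ M.Λ s) :
    ∃ s', s ≤ s' ∧ s' + 1 ≤ M.nt s ∧ Dec1 ψ (↑(M.Λ (s'+1)) : Set (LTL AP)) :=
  M.decomp_aux (M.nt s - s) s ψ le_rfl he hψ

/-- the i-th transition position -/
noncomputable def t (M : PM AP) : ℕ → ℕ
  | 0 => M.nt 0
  | i+1 => M.nt (t M i + 1)

/-- the start of the i-th block -/
noncomputable def lo (M : PM AP) : ℕ → ℕ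
  | 0 => 0
  | i+1 => t M i + 1

lemma t_eq (i : ℕ) : M.t i = M.nt (M.lo i) := by cases i <;> rfl

lemma lo_le_t (i : ℕ) : M.lo i ≤ M.t i := by
  rw [M.t_eq]; exact M.le_nt _

lemma isT_t (i : ℕ) : M.isT (M.t i) := by
  rw [M.t_eq]; exact M.isT_nt _

lemma t_lt_t_succ (i : ℕ) : M.t i < M.t (i+1) := by
  have : M.t i + 1 ≤ M.nt (M.t i + 1) := M.le_nt _
  simpa [t] using this

lemma t_strictMono : StrictMono M.t := strictMono_nat_of_lt_succ M.t_lt_t_succ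

lemma le_t (i : ℕ) : i ≤ M.t i := by
  induction i with
  | zero => exact Nat.zero_le _
  | succ i ih => have := M.t_lt_t_succ i; omega

lemma nt_in_block {i s : ℕ} (h1 : M.lo i ≤ s) (h2 : s ≤ M.t i) : M.nt s = M.t i := by
  refine le_antisymm (M.nt_min h2 (M.isT_t i)) ?_
  rw [M.t_eq]
  exact M.nt_min (le_trans h1 (M.le_nt s)) (M.isT_nt s)

/-- the union of labels of the i-th block -/
def Del (i : ℕ) : Set (LTL AP) :=
  {ψ | ∃ s, M.lo i ≤ s ∧ s ≤ M.t i ∧ ψ ∈ M.Λ s}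

lemma mem_Del {i s : ℕ} {ψ : LTL AP} (h1 : M.lo i ≤ s) (h2 : s ≤ M.t i)
    (h3 : ψ ∈ M.Λ s) : ψ ∈ M.Del i := ⟨s, h1, h2, h3⟩

lemma blockOf (s : ℕ) : ∃ i, M.lo i ≤ s ∧ s ≤ M.t i := by
  have hex : ∃ i, s ≤ M.t i := ⟨s, M.le_t s⟩
  obtain ⟨i, hi1, hi2⟩ : ∃ i, s ≤ M.t i ∧ ∀ j < i, ¬ s ≤ M.t j :=
    ⟨Nat.find hex, Nat.find_spec hex, fun j hj => Nat.find_min hex hj⟩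
  cases i with
  | zero => exact ⟨0, Nat.zero_le s, hi1⟩
  | succ j =>
      have := hi2 j (lt_add_one j)
      refine ⟨j+1, ?_, hi1⟩
      show M.t j + 1 ≤ s
      omega

end PM

end Sound

namespace Sound

namespace PM

open Classical

set_option linter.unusedSectionVars false

variable {AP : Type} [DecidableEq AP] (M : PM AP)

lemma pers_Del {i : ℕ} {ψ : LTL AP} (he : Elementary ψ) (hψ : ψ ∈ M.Del i) :
    ψ ∈ M.Λ (M.t i) := by
  obtain ⟨s, h1, h2, h3⟩ := hψ
  have := M.persist he h3
  rwa [M.nt_in_block h1 h2] at this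

lemma dec_Del {i : ℕ} {ψ : LTL AP} (he : ¬ Elementary ψ) (hψ : ψ ∈ M.Del i) :
    Dec1 ψ (M.Del i) := by
  obtain ⟨s, h1, h2, h3⟩ := hψ
  obtain ⟨s', hs1, hs2, hs3⟩ := M.decomp he h3
  rw [M.nt_in_block h1 h2] at hs2
  refine Dec1_mono (fun χ hχ => ?_) ψ hs3
  exact M.mem_Del (by omega) hs2 hχ

lemma next_Del {i : ℕ} {α : LTL AP} (h : LTL.next α ∈ M.Λ (M.t i)) :
    α ∈ M.Del (i+1) := by
  have h1 : α ∈ M.Λ (M.t i + 1) := M.tnext _ (M.isT_t i) α h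
  exact M.mem_Del (le_refl (M.t i + 1)) (M.lo_le_t (i+1)) h1

lemma negnext_Del {i : ℕ} {α : LTL AP} (h : LTL.neg (LTL.next α) ∈ M.Λ (M.t i)) :
    LTL.neg α ∈ M.Del (i+1) := by
  have h1 : LTL.neg α ∈ M.Λ (M.t i + 1) := M.tnegnext _ (M.isT_t i) α h
  exact M.mem_Del (le_refl (M.t i + 1)) (M.lo_le_t (i+1)) h1

lemma walk {α β : LTL AP} : ∀ d s, M.nt s - s ≤ d → (α.until_ β) ∈ M.Λ s →
    ∃ v, s ≤ v ∧ v ≤ M.nt s ∧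
      (β ∈ M.Λ v ∨ (M.isT v ∧ LTL.next (α.until_ β) ∈ M.Λ v ∧ v = M.nt s)) := by
  intro d
  induction d with
  | zero =>
      intro s hd hψ
      have hns : M.nt s = s := by have := M.le_nt s; omega
      have : Elementary (α.until_ β) := M.elem s (hns ▸ M.isT_nt s) _ hψ
      simp [Elementary] at this
  | succ d ih =>
      intro s hd hψ
      by_cases h : M.isT s
      · have : Elementary (α.until_ β) := M.elem s h _ hψ
        simp [Elementary] at this
      · have hst := M.stat s h
        have hlt : s + 1 ≤ M.nt s := M.lt_nt h
        have heq : M.nt (s+1) = M.nt s := M.nt_succ h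
        rcases step1 hst _ hψ with h' | h'
        · obtain ⟨v, h1, h2, h3⟩ := ih (s+1) (by omega) h'
          rw [heq] at h2 h3
          exact ⟨v, by omega, h2, h3⟩
        · rcases h' with hβ | ⟨hα, hX⟩
          · exact ⟨s+1, by omega, hlt, Or.inl hβ⟩
          · have hp : LTL.next (α.until_ β) ∈ M.Λ (M.nt (s+1)) :=
              M.persist (by simp [Elementary]) hX
            rw [heq] at hp
            exact ⟨M.nt s, by omega, le_rfl,
              Or.inr ⟨M.isT_nt s, hp, rfl⟩⟩

lemma prop1 {α β : LTL AP} {s : ℕ} (h : M.isT s)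
    (hX : LTL.next (α.until_ β) ∈ M.Λ s) :
    ∃ v, s < v ∧ v ≤ M.nt (s+1) ∧
      (β ∈ M.Λ v ∨ (M.isT v ∧ LTL.next (α.until_ β) ∈ M.Λ v ∧ v = M.nt (s+1))) := by
  have hU : (α.until_ β) ∈ M.Λ (s+1) := M.tnext s h (α.until_ β) hX
  obtain ⟨v, h1, h2, h3⟩ := M.walk (M.nt (s+1) - (s+1)) (s+1) le_rfl hU
  exact ⟨v, by omega, h2, h3⟩

/-- Eventuality hypothesis (supplied separately in the two end-cases). -/
def Ev : Prop :=
  ∀ s (α β : LTL AP), M.isT s → LTL.next (α.until_ β) ∈ M.Λ s →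
    ∃ w, s < w ∧ β ∈ M.Λ w

lemma ev_Del (hev : M.Ev) {i : ℕ} {α β : LTL AP}
    (h : LTL.next (α.until_ β) ∈ M.Λ (M.t i)) :
    ∃ m, i < m ∧ β ∈ M.Del m := by
  obtain ⟨w, hw1, hw2⟩ := hev (M.t i) α β (M.isT_t i) h
  obtain ⟨m, hm1, hm2⟩ := M.blockOf w
  refine ⟨m, ?_, M.mem_Del hm1 hm2 hw2⟩
  by_contra hc
  have : M.t m ≤ M.t i := M.t_strictMono.monotone (by omega)
  omega

lemma untilLemma (hev : M.Ev) {α β : LTL AP} :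
    ∀ d i, (α.until_ β) ∈ M.Del i → (∃ m, i ≤ m ∧ m ≤ i + d ∧ β ∈ M.Del m) →
    ∃ m, i ≤ m ∧ β ∈ M.Del m ∧ ∀ j, i ≤ j → j < m → α ∈ M.Del j := by
  intro d
  induction d with
  | zero =>
      intro i hU hm
      obtain ⟨m, h1, h2, h3⟩ := hm
      have h4 : m = i := by omega
      exact ⟨m, h1, h3, fun j hj1 hj2 => by omega⟩
  | succ d ih =>
      intro i hU hm
      obtain ⟨m, h1, h2, h3⟩ := hm
      rcases eq_or_lt_of_le h1 with rfl | hmi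
      · exact ⟨i, le_rfl, h3, fun j hj1 hj2 => by omega⟩
      · rcases M.dec_Del (by simp [Elementary]) hU with hβ | ⟨hα, hX⟩
        · exact ⟨i, le_rfl, hβ, fun j hj1 hj2 => by omega⟩
        · have hXp : LTL.next (α.until_ β) ∈ M.Λ (M.t i) :=
            M.pers_Del (by simp [Elementary]) hX
          have hU' : (α.until_ β) ∈ M.Del (i+1) := M.next_Del hXp
          obtain ⟨m', hm1, hm2, hm3⟩ := ih (i+1) hU' ⟨m, by omega, by omega, h3⟩
          refine ⟨m', by omega, hm2, fun j hj1 hj2 => ?_⟩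
          rcases eq_or_lt_of_le hj1 with rfl | hji
          · exact hα
          · exact hm3 j (by omega) hj2

lemma negUntilLemma {α β : LTL AP} :
    ∀ d i, LTL.neg (α.until_ β) ∈ M.Del i →
    (∃ e, e ≤ d ∧ LTL.neg α ∈ M.Del (i+e) ∧ ∀ e', e' ≤ e → LTL.neg β ∈ M.Del (i+e')) ∨
    ((∀ e, e ≤ d → LTL.neg β ∈ M.Del (i+e)) ∧ LTL.neg (α.until_ β) ∈ M.Del (i+d)) := by
  intro d
  induction d with
  | zero =>
      intro i hU
      rcases M.dec_Del (by simp [Elementary]) hU with ⟨hα, hβ⟩ | ⟨hβ, hX⟩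
      · exact Or.inl ⟨0, le_rfl, hα, fun e' he' => by
          have : e' = 0 := by omega
          simpa [this] using hβ⟩
      · refine Or.inr ⟨fun e he => ?_, by simpa using hU⟩
        have : e = 0 := by omega
        simpa [this] using hβ
  | succ d ih =>
      intro i hU
      rcases ih i hU with h | ⟨hall, hU'⟩
      · exact Or.inl (h.imp fun e he => ⟨by omega, he.2.1, he.2.2⟩)
      · rcases M.dec_Del (by simp [Elementary]) hU' with ⟨hα, hβ⟩ | ⟨hβ, hX⟩
        · exact Or.inl ⟨d, by omega, hα, fun e' he' => hall e' (by omega)⟩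
        · have hXp : LTL.next (LTL.neg (α.until_ β)) ∈ M.Λ (M.t (i+d)) :=
            M.pers_Del (by simp [Elementary]) hX
          have hU'' : LTL.neg (α.until_ β) ∈ M.Del (i+d+1) := M.next_Del hXp
          have hβ'' : LTL.neg β ∈ M.Del (i+d+1) := by
            rcases M.dec_Del (by simp [Elementary]) hU'' with ⟨_, h⟩ | ⟨h, _⟩ <;> exact h
          refine Or.inr ⟨fun e he => ?_, by
            have : i + (d+1) = i + d + 1 := by omega
            rw [this]; exact hU''⟩
          rcases Nat.lt_or_ge e (d+1) with h' | h'
          · exact hall e (by omega)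
          · have : e = d + 1 := by omega
            subst this
            have : i + (d+1) = i + d + 1 := by omega
            rw [this]; exact hβ''

end PM

end Sound

namespace Sound

lemma shift_shift {AP : Type} (σ : ℕ → Set AP) (a b : ℕ) :
    shift (shift σ a) b = shift σ (a + b) := by
  funext j
  show σ (a + (b + j)) = σ (a + b + j)
  rw [← Nat.add_assoc]

namespace PM

open Classical

set_option linter.unusedSectionVars false

variable {AP : Type} [DecidableEq AP] (M : PM AP)

/-- the ω-word read off the transition labels -/
def sig : ℕ → Set AP := fun i => {p | LTL.atom p ∈ M.Λ (M.t i)}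

lemma Sem (hev : M.Ev) : ∀ N (ψ : LTL AP), ψ.length ≤ N → ∀ i, ψ ∈ M.Del i →
    Sat (shift M.sig i) ψ := by
  intro N
  induction N with
  | zero =>
      intro ψ hlen
      exact absurd hlen (by have := one_le_length ψ; omega)
  | succ N ih =>
      intro ψ hlen i hψ
      cases ψ with
      | atom p =>
          have h := M.pers_Del (by simp [Elementary]) hψ
          show p ∈ shift M.sig i 0
          simpa [LTL.shift, sig] using h
      | and α β =>
          obtain ⟨hα, hβ⟩ := M.dec_Del (by simp [Elementary]) hψ
          have h1 := one_le_length α; have h2 := one_le_length β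
          simp only [LTL.length] at hlen
          exact ⟨ih α (by omega) i hα, ih β (by omega) i hβ⟩
      | next α =>
          have hX := M.pers_Del (by simp [Elementary]) hψ
          have h1 := M.next_Del hX
          simp only [LTL.length] at hlen
          have := ih α (by omega) (i+1) h1
          show Sat (shift (shift M.sig i) 1) α
          rwa [shift_shift]
      | until_ α β =>
          have h1 := one_le_length α; have h2 := one_le_length β
          simp only [LTL.length] at hlen
          have hpre : ∃ m, i ≤ m ∧ β ∈ M.Del m := by
            rcases M.dec_Del (by simp [Elementary]) hψ with hβ | ⟨hα, hX⟩
            · exact ⟨i, le_rfl, hβ⟩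
            · have hXp := M.pers_Del (ψ := LTL.next (α.until_ β))
                (by simp [Elementary]) hX
              obtain ⟨m, hm1, hm2⟩ := M.ev_Del hev hXp
              exact ⟨m, by omega, hm2⟩
          obtain ⟨m, him, hβm⟩ := hpre
          obtain ⟨m', hm1, hm2, hm3⟩ :=
            M.untilLemma hev (m - i) i hψ ⟨m, him, by omega, hβm⟩
          refine ⟨m' - i, ?_, ?_⟩
          · rw [shift_shift]
            have hmi : i + (m' - i) = m' := by omega
            rw [hmi]
            exact ih β (by omega) m' hm2
          · intro e he
            rw [shift_shift]
            exact ih α (by omega) (i+e) (hm3 (i+e) (by omega) (by omega))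
      | neg χ =>
          cases χ with
          | atom p =>
              have h := M.pers_Del (by simp [Elementary]) hψ
              have hno := M.noCon (M.t i) (M.isT_t i) (LTL.atom p)
              intro hc
              exact hno ⟨by have hc' : p ∈ shift M.sig i 0 := hc; simpa [LTL.shift, sig] using hc', h⟩
          | neg α =>
              have hα := M.dec_Del (ψ := LTL.neg (LTL.neg α))
                (by simp [Elementary]) hψ
              have h1 := one_le_length α
              simp only [LTL.length] at hlen
              intro hc
              exact hc (ih α (by omega) i hα)
          | and α β =>
              have hd := M.dec_Del (ψ := LTL.neg (α.and β))
                (by simp [Elementary]) hψ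
              have h1 := one_le_length α; have h2 := one_le_length β
              simp only [LTL.length] at hlen
              rintro ⟨hsα, hsβ⟩
              rcases hd with h' | h'
              · exact (ih (LTL.neg α) (by simp [LTL.length]; omega) i h') hsα
              · exact (ih (LTL.neg β) (by simp [LTL.length]; omega) i h') hsβ
          | next α =>
              have hX := M.pers_Del (ψ := LTL.neg (LTL.next α))
                (by simp [Elementary]) hψ
              have h1 := M.negnext_Del hX
              simp only [LTL.length] at hlen
              have hn := ih (LTL.neg α) (by simp [LTL.length]; omega) (i+1) h1
              intro hc
              have hc' : Sat (shift (shift M.sig i) 1) α := hc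
              rw [shift_shift] at hc'
              exact hn hc'
          | until_ α β =>
              have h1 := one_le_length α; have h2 := one_le_length β
              simp only [LTL.length] at hlen
              rintro ⟨d, hb, ha⟩
              rw [shift_shift] at hb
              rcases M.negUntilLemma d i hψ with ⟨e, hed, hnα, hnβ⟩ | ⟨hall, -⟩
              · rcases eq_or_lt_of_le hed with rfl | helt
                · exact (ih (LTL.neg β) (by simp [LTL.length]; omega) (i+e)
                    (hnβ e le_rfl)) hb
                · have := ha e helt
                  rw [shift_shift] at this
                  exact (ih (LTL.neg α) (by simp [LTL.length]; omega) (i+e) hnα) this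
              · exact (ih (LTL.neg β) (by simp [LTL.length]; omega) (i+d)
                  (hall d le_rfl)) hb

theorem pm_sat (hev : M.Ev) {φ : LTL AP} (hφ : φ ∈ M.Λ 0) :
    ∃ σ : ℕ → Set AP, Sat σ φ := by
  have h0 : φ ∈ M.Del 0 := M.mem_Del (le_of_eq rfl) (Nat.zero_le _) hφ
  exact ⟨shift M.sig 0, M.Sem hev φ.length φ le_rfl 0 h0⟩

end PM

end Sound

namespace Sound

set_option linter.unusedSectionVars false

variable {AP : Type} [DecidableEq AP]

lemma labelAt_append_lt {l l' : List (Finset (LTL AP))} {i : ℕ} (h : i < l.length) :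
    labelAt (l ++ l') i = labelAt l i := List.getD_append l l' ∅ i h

lemma labelAt_append_len {l : List (Finset (LTL AP))} {x : Finset (LTL AP)} :
    labelAt (l ++ [x]) l.length = x := by
  show (l ++ [x]).getD l.length ∅ = x
  rw [List.getD_append_right _ _ _ _ le_rfl]
  simp

/-- a single rule step in a branch -/
def StepF (Γ : ℕ → Finset (LTL AP)) (s : ℕ) : Prop :=
  SChild (Γ s) (Γ (s+1)) ∨ (Poised (Γ s) ∧ Γ (s+1) = nextLabel (Γ s))

/-- ticked end-of-branch condition -/
def EndC (Γ : ℕ → Finset (LTL AP)) (n : ℕ) : Prop :=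
  Γ n = ∅ ∨ (Poised (Γ n) ∧ ∃ u, u < n ∧ Poised (Γ u) ∧ Γ n ⊆ Γ u ∧
    ∀ α β : LTL AP, LTL.next (α.until_ β) ∈ Γ u → ∃ w, u < w ∧ w ≤ n ∧ β ∈ Γ w)

lemma extract (T : Tab AP) (anc : List (Finset (LTL AP))) (hv : Valid anc T)
    (hs : T.Successful) :
    ∃ (n : ℕ) (Γ : ℕ → Finset (LTL AP)), anc.length ≤ n ∧
      (∀ i, i < anc.length → Γ i = labelAt anc i) ∧ Γ anc.length = T.label ∧
      (∀ s, anc.length ≤ s → s < n → StepF Γ s) ∧ EndC Γ n := by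
  induction hv with
  | empty anc =>
      refine ⟨anc.length, fun i => if i < anc.length then labelAt anc i else ∅,
        le_rfl, fun i hi => by simp [hi], by simp [Tab.label], ?_, ?_⟩
      · intro s h1 h2; omega
      · left; simp
  | contra anc Γ α h1 h2 => exact absurd hs (by simp [Tab.Successful])
  | unfin anc Γ => exact absurd hs (by simp [Tab.Successful])
  | prune anc Γ hp h => exact absurd hs (by simp [Tab.Successful])
  | prune0 anc Γ hp h => exact absurd hs (by simp [Tab.Successful])
  | loop anc Γ hp h =>
      obtain ⟨u, hu, hpu, hsub, hful⟩ := h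
      refine ⟨anc.length, fun i => if i < anc.length then labelAt anc i else Γ,
        le_rfl, fun i hi => by simp [hi], by simp [Tab.label], ?_, ?_⟩
      · intro s h1 h2; omega
      · right
        constructor
        · simpa using hp
        · refine ⟨u, hu, by simpa [hu] using hpu, by simpa [hu] using hsub, ?_⟩
          intro α β hX
          have hX' : LTL.next (α.until_ β) ∈ labelAt anc u := by simpa [hu] using hX
          obtain ⟨w, hw1, hw2, hw3⟩ := hful α β hX'
          refine ⟨w, hw1, hw2, ?_⟩
          show β ∈ if w < anc.length then labelAt anc w else Γ
          rcases lt_or_eq_of_le hw2 with h' | h'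
          · rw [if_pos h']
            rwa [labelAt_append_lt h'] at hw3
          · rw [if_neg (by omega)]
            rw [h', labelAt_append_len] at hw3
            exact hw3
  | static1 anc Γ0 t h hv ih =>
      obtain ⟨n, Γf, hn, hanc, hlbl, hsteps, hend⟩ := ih hs
      simp only [List.length_append, List.length_singleton] at hn hanc hlbl hsteps
      refine ⟨n, Γf, by omega, ?_, ?_, ?_, hend⟩
      · intro i hi
        rw [hanc i (by omega), labelAt_append_lt hi]
      · rw [hanc anc.length (by omega), labelAt_append_len]
        rfl
      · intro s h1 h2
        rcases eq_or_lt_of_le h1 with rfl | h1'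
        · left; left
          rw [hanc anc.length (by omega), labelAt_append_len, hlbl]
          exact h
        · exact hsteps s (by omega) h2
  | transition anc Γ0 t hp hl hpr hp0 h hv ih =>
      obtain ⟨n, Γf, hn, hanc, hlbl, hsteps, hend⟩ := ih hs
      simp only [List.length_append, List.length_singleton] at hn hanc hlbl hsteps
      refine ⟨n, Γf, by omega, ?_, ?_, ?_, hend⟩
      · intro i hi
        rw [hanc i (by omega), labelAt_append_lt hi]
      · rw [hanc anc.length (by omega), labelAt_append_len]
        rfl
      · intro s h1 h2
        rcases eq_or_lt_of_le h1 with rfl | h1'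
        · right
          have e1 : Γf anc.length = Γ0 := by
            rw [hanc anc.length (by omega), labelAt_append_len]
          have e2 : Γf (anc.length+1) = t.label := hlbl
          rw [e1, e2, h]
          exact ⟨hp, rfl⟩
        · exact hsteps s (by omega) h2
  | static2 anc Γ0 t₁ t₂ h hv₁ hv₂ ih₁ ih₂ =>
      rcases hs with hs | hs
      · obtain ⟨n, Γf, hn, hanc, hlbl, hsteps, hend⟩ := ih₁ hs
        simp only [List.length_append, List.length_singleton] at hn hanc hlbl hsteps
        refine ⟨n, Γf, by omega, ?_, ?_, ?_, hend⟩
        · intro i hi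
          rw [hanc i (by omega), labelAt_append_lt hi]
        · rw [hanc anc.length (by omega), labelAt_append_len]
          rfl
        · intro s h1 h2
          rcases eq_or_lt_of_le h1 with rfl | h1'
          · left; right; left
            refine ⟨t₂.label, ?_⟩
            rw [hanc anc.length (by omega), labelAt_append_len, hlbl]
            exact h
          · exact hsteps s (by omega) h2
      · obtain ⟨n, Γf, hn, hanc, hlbl, hsteps, hend⟩ := ih₂ hs
        simp only [List.length_append, List.length_singleton] at hn hanc hlbl hsteps
        refine ⟨n, Γf, by omega, ?_, ?_, ?_, hend⟩
        · intro i hi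
          rw [hanc i (by omega), labelAt_append_lt hi]
        · rw [hanc anc.length (by omega), labelAt_append_len]
          rfl
        · intro s h1 h2
          rcases eq_or_lt_of_le h1 with rfl | h1'
          · left; right; right
            refine ⟨t₁.label, ?_⟩
            rw [hanc anc.length (by omega), labelAt_append_len, hlbl]
            exact h
          · exact hsteps s (by omega) h2

end Sound

namespace Sound

set_option linter.unusedSectionVars false

variable {AP : Type} [DecidableEq AP]

lemma mem_nextLabel_next {G : Finset (LTL AP)} {α : LTL AP} (h : LTL.next α ∈ G) :
    α ∈ nextLabel G := Finset.mem_biUnion.2 ⟨_, h, by simp⟩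

lemma mem_nextLabel_negnext {G : Finset (LTL AP)} {α : LTL AP}
    (h : LTL.neg (LTL.next α) ∈ G) : LTL.neg α ∈ nextLabel G :=
  Finset.mem_biUnion.2 ⟨_, h, by simp⟩

lemma trans_of_poised {Γ : ℕ → Finset (LTL AP)} {s : ℕ} (hstep : StepF Γ s)
    (hp : Poised (Γ s)) : Γ (s+1) = nextLabel (Γ s) := by
  rcases hstep with h | h
  · exact absurd hp (schild_not_poised h)
  · exact h.2

/-! ### the EMPTY case -/

def eL (Γ : ℕ → Finset (LTL AP)) (n : ℕ) : ℕ → Finset (LTL AP) :=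
  fun s => if s ≤ n then Γ s else ∅

def eT (Γ : ℕ → Finset (LTL AP)) (n : ℕ) : ℕ → Prop :=
  fun s => if s < n then Poised (Γ s) else True

lemma eL_le {Γ : ℕ → Finset (LTL AP)} {n s : ℕ} (h : s ≤ n) : eL Γ n s = Γ s :=
  if_pos h

lemma eL_ge {Γ : ℕ → Finset (LTL AP)} {n s : ℕ} (hend : Γ n = ∅) (h : ¬ s < n) :
    eL Γ n s = ∅ := by
  by_cases h' : s ≤ n
  · have : s = n := by omega
    rw [eL_le h', this, hend]
  · exact if_neg h'

lemma eT_lt {Γ : ℕ → Finset (LTL AP)} {n s : ℕ} (h : s < n) :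
    eT Γ n s ↔ Poised (Γ s) := by simp [eT, h]

lemma eT_ge {Γ : ℕ → Finset (LTL AP)} {n s : ℕ} (h : ¬ s < n) : eT Γ n s := by
  simp [eT, h]

noncomputable def emptyPM (Γ : ℕ → Finset (LTL AP)) (n : ℕ)
    (hsteps : ∀ s, s < n → StepF Γ s) (hend : Γ n = ∅) : PM AP where
  Λ := eL Γ n
  isT := eT Γ n
  elem := by
    intro s hs ψ hψ
    by_cases h : s < n
    · rw [eL_le (by omega)] at hψ
      exact ((eT_lt h).1 hs).2.2 ψ hψ
    · rw [eL_ge hend h] at hψ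
      exact absurd hψ (Finset.notMem_empty ψ)
  noCon := by
    intro s hs α hα
    by_cases h : s < n
    · rw [eL_le (by omega)] at hα
      exact ((eT_lt h).1 hs).2.1 α hα
    · rw [eL_ge hend h] at hα
      exact absurd hα.1 (Finset.notMem_empty α)
  tnext := by
    intro s hs α hα
    by_cases h : s < n
    · have hp := (eT_lt h).1 hs
      rw [eL_le (by omega)] at hα
      rw [eL_le (by omega : s + 1 ≤ n), trans_of_poised (hsteps s h) hp]
      exact mem_nextLabel_next hα
    · rw [eL_ge hend h] at hα
      exact absurd hα (Finset.notMem_empty _)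
  tnegnext := by
    intro s hs α hα
    by_cases h : s < n
    · have hp := (eT_lt h).1 hs
      rw [eL_le (by omega)] at hα
      rw [eL_le (by omega : s + 1 ≤ n), trans_of_poised (hsteps s h) hp]
      exact mem_nextLabel_negnext hα
    · rw [eL_ge hend h] at hα
      exact absurd hα (Finset.notMem_empty _)
  stat := by
    intro s hs
    by_cases h : s < n
    · have hnp : ¬ Poised (Γ s) := fun hp => hs ((eT_lt h).2 hp)
      rcases hsteps s h with h' | h'
      · rw [eL_le (by omega : s ≤ n), eL_le (by omega : s + 1 ≤ n)]
        exact h'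
      · exact absurd h'.1 hnp
    · exact absurd (eT_ge h) hs
  inf := fun s => ⟨max s n, le_max_left _ _, eT_ge (by omega)⟩

lemma emptyPM_ev (Γ : ℕ → Finset (LTL AP)) (n : ℕ)
    (hsteps : ∀ s, s < n → StepF Γ s) (hend : Γ n = ∅) :
    (emptyPM Γ n hsteps hend).Ev := by
  set M := emptyPM Γ n hsteps hend with hM
  suffices h : ∀ d s (α β : LTL AP), n - s ≤ d → M.isT s →
      LTL.next (α.until_ β) ∈ M.Λ s → ∃ w, s < w ∧ β ∈ M.Λ w by
    intro s α β hs hX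
    exact h (n - s) s α β le_rfl hs hX
  intro d
  induction d with
  | zero =>
      intro s α β hd hs hX
      have he : M.Λ s = ∅ := eL_ge hend (by omega)
      rw [he] at hX
      exact absurd hX (Finset.notMem_empty _)
  | succ d ih =>
      intro s α β hd hs hX
      by_cases h : s < n
      · obtain ⟨v, hv1, hv2, hv3⟩ := M.prop1 hs hX
        rcases hv3 with hβ | ⟨hT, hX', hv4⟩
        · exact ⟨v, hv1, hβ⟩
        · have hvn : v < n := by
            by_contra hc
            have he : M.Λ v = ∅ := eL_ge hend hc
            rw [he] at hX'
            exact absurd hX' (Finset.notMem_empty _)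
          obtain ⟨w, hw1, hw2⟩ := ih v α β (by omega) hT hX'
          exact ⟨w, by omega, hw2⟩
      · have he : M.Λ s = ∅ := eL_ge hend h
        rw [he] at hX
        exact absurd hX (Finset.notMem_empty _)

theorem empty_sat {φ : LTL AP} (Γ : ℕ → Finset (LTL AP)) (n : ℕ) (hφ : φ ∈ Γ 0)
    (hsteps : ∀ s, s < n → StepF Γ s) (hend : Γ n = ∅) :
    ∃ σ : ℕ → Set AP, Sat σ φ := by
  refine (emptyPM Γ n hsteps hend).pm_sat (emptyPM_ev Γ n hsteps hend) ?_
  have h0 : eL Γ n 0 = Γ 0 := eL_le (Nat.zero_le n)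
  show φ ∈ eL Γ n 0
  rw [h0]
  exact hφ

end Sound

namespace Sound

set_option linter.unusedSectionVars false

variable {AP : Type} [DecidableEq AP]

/-! ### the LOOP case -/

/-- position in the original branch visited at time `s`, looping through
`(u, n]` forever. -/
def wseq (u n : ℕ) : ℕ → ℕ
  | 0 => 0
  | s+1 => if wseq u n s = n then u + 1 else wseq u n s + 1

lemma wseq_le {u n : ℕ} (hu : u < n) : ∀ s, wseq u n s ≤ n := by
  intro s
  induction s with
  | zero => exact Nat.zero_le n
  | succ s ih =>
      by_cases h : wseq u n s = n
      · simp [wseq, h]; omega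
      · simp [wseq, h]; omega

lemma wseq_hit {u n : ℕ} (hu : u < n) :
    ∀ d s, d ≤ n - wseq u n s → wseq u n (s + d) = wseq u n s + d := by
  intro d
  induction d with
  | zero => intro s _; rfl
  | succ d ih =>
      intro s hd
      have h1 : wseq u n (s + d) = wseq u n s + d := ih s (by omega)
      have h2 : wseq u n (s + d) ≠ n := by
        have := wseq_le hu s
        omega
      show wseq u n (s + d + 1) = wseq u n s + (d + 1)
      rw [show wseq u n (s + d + 1) = if wseq u n (s+d) = n then u + 1
        else wseq u n (s+d) + 1 from rfl, if_neg h2, h1]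
      omega

def lL (Γ : ℕ → Finset (LTL AP)) (u n : ℕ) : ℕ → Finset (LTL AP) :=
  fun s => Γ (wseq u n s)

def lT (Γ : ℕ → Finset (LTL AP)) (u n : ℕ) : ℕ → Prop :=
  fun s => Poised (Γ (wseq u n s))

noncomputable def loopPM (Γ : ℕ → Finset (LTL AP)) (u n : ℕ) (hu : u < n)
    (hsteps : ∀ s, s < n → StepF Γ s) (hpn : Poised (Γ n)) (hpu : Poised (Γ u))
    (hsub : Γ n ⊆ Γ u) : PM AP where
  Λ := lL Γ u n
  isT := lT Γ u n
  elem := fun s hs ψ hψ => hs.2.2 ψ hψ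
  noCon := fun s hs α hα => hs.2.1 α hα
  tnext := by
    intro s hs α hα
    show α ∈ Γ (wseq u n (s+1))
    by_cases h : wseq u n s = n
    · rw [show wseq u n (s+1) = u + 1 from by simp [wseq, h],
        trans_of_poised (hsteps u hu) hpu]
      exact mem_nextLabel_next (hsub (h ▸ hα))
    · have hlt : wseq u n s < n := lt_of_le_of_ne (wseq_le hu s) h
      rw [show wseq u n (s+1) = wseq u n s + 1 from by simp [wseq, h],
        trans_of_poised (hsteps _ hlt) hs]
      exact mem_nextLabel_next hα
  tnegnext := by
    intro s hs α hα
    show LTL.neg α ∈ Γ (wseq u n (s+1))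
    by_cases h : wseq u n s = n
    · rw [show wseq u n (s+1) = u + 1 from by simp [wseq, h],
        trans_of_poised (hsteps u hu) hpu]
      exact mem_nextLabel_negnext (hsub (h ▸ hα))
    · have hlt : wseq u n s < n := lt_of_le_of_ne (wseq_le hu s) h
      rw [show wseq u n (s+1) = wseq u n s + 1 from by simp [wseq, h],
        trans_of_poised (hsteps _ hlt) hs]
      exact mem_nextLabel_negnext hα
  stat := by
    intro s hs
    have h : wseq u n s ≠ n := fun hc =>
      hs (show Poised (Γ (wseq u n s)) by rw [hc]; exact hpn)
    have hlt : wseq u n s < n := lt_of_le_of_ne (wseq_le hu s) h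
    rcases hsteps _ hlt with h' | h'
    · show SChild (Γ (wseq u n s)) (Γ (wseq u n (s+1)))
      rw [show wseq u n (s+1) = wseq u n s + 1 from by simp [wseq, h]]
      exact h'
    · exact absurd h'.1 hs
  inf := by
    intro s
    refine ⟨s + (n - wseq u n s), by omega, ?_⟩
    show Poised (Γ (wseq u n (s + (n - wseq u n s))))
    rw [wseq_hit hu _ s le_rfl]
    have := wseq_le hu s
    rw [show wseq u n s + (n - wseq u n s) = n from by omega]
    exact hpn

lemma loopPM_ev (Γ : ℕ → Finset (LTL AP)) (u n : ℕ) (hu : u < n)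
    (hsteps : ∀ s, s < n → StepF Γ s) (hpn : Poised (Γ n)) (hpu : Poised (Γ u))
    (hsub : Γ n ⊆ Γ u)
    (hful : ∀ α β : LTL AP, LTL.next (α.until_ β) ∈ Γ u →
      ∃ w, u < w ∧ w ≤ n ∧ β ∈ Γ w) :
    (loopPM Γ u n hu hsteps hpn hpu hsub).Ev := by
  set M := loopPM Γ u n hu hsteps hpn hpu hsub with hM
  -- fulfilment at an `n`-position
  have atEnd : ∀ s (α β : LTL AP), wseq u n s = n →
      LTL.next (α.until_ β) ∈ M.Λ s → ∃ w, s < w ∧ β ∈ M.Λ w := by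
    intro s α β hws hX
    have hXu : LTL.next (α.until_ β) ∈ Γ u := by
      have : LTL.next (α.until_ β) ∈ Γ n := by
        show LTL.next (α.until_ β) ∈ Γ n
        have : M.Λ s = Γ n := by
          show Γ (wseq u n s) = Γ n
          rw [hws]
        rwa [this] at hX
      exact hsub this
    obtain ⟨v, hv1, hv2, hv3⟩ := hful α β hXu
    have hbase : wseq u n (s+1) = u + 1 := by simp [wseq, hws]
    have hw : wseq u n (s + 1 + (v - u - 1)) = v := by
      have h1 : v - u - 1 ≤ n - wseq u n (s+1) := by rw [hbase]; omega
      have := wseq_hit hu (v - u - 1) (s+1) h1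
      rw [hbase] at this
      rw [this]
      omega
    refine ⟨s + 1 + (v - u - 1), by omega, ?_⟩
    show β ∈ Γ (wseq u n (s + 1 + (v - u - 1)))
    rw [hw]
    exact hv3
  suffices h : ∀ d s (α β : LTL AP), n - wseq u n s ≤ d → M.isT s →
      LTL.next (α.until_ β) ∈ M.Λ s → ∃ w, s < w ∧ β ∈ M.Λ w by
    intro s α β hs hX
    exact h (n - wseq u n s) s α β le_rfl hs hX
  intro d
  induction d with
  | zero =>
      intro s α β hd hs hX
      have hws : wseq u n s = n := by
        have := wseq_le hu s
        omega
      exact atEnd s α β hws hX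
  | succ d ih =>
      intro s α β hd hs hX
      by_cases hws : wseq u n s = n
      · exact atEnd s α β hws hX
      · have hlt : wseq u n s < n := lt_of_le_of_ne (wseq_le hu s) hws
        obtain ⟨v, hv1, hv2, hv3⟩ := M.prop1 hs hX
        rcases hv3 with hβ | ⟨hT, hX', hv4⟩
        · exact ⟨v, hv1, hβ⟩
        · -- the next `n`-hit is a transition bounding `nt (s+1)`
          have hh : wseq u n (s + (n - wseq u n s)) = n := by
            rw [wseq_hit hu _ s le_rfl]
            have := wseq_le hu s
            omega
          have hTh : M.isT (s + (n - wseq u n s)) := by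
            show Poised (Γ (wseq u n (s + (n - wseq u n s))))
            rw [hh]
            exact hpn
          have hnt : M.nt (s+1) ≤ s + (n - wseq u n s) :=
            M.nt_min (by omega) hTh
          have hvh : v ≤ s + (n - wseq u n s) := le_trans hv2 hnt
          have hwv : wseq u n v = wseq u n s + (v - s) := by
            have := wseq_hit hu (v - s) s (by omega)
            rwa [show s + (v - s) = v from by omega] at this
          obtain ⟨w, hw1, hw2⟩ := ih v α β (by omega) hT hX'
          exact ⟨w, by omega, hw2⟩

theorem loop_sat {φ : LTL AP} (Γ : ℕ → Finset (LTL AP)) (u n : ℕ) (hu : u < n)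
    (hφ : φ ∈ Γ 0) (hsteps : ∀ s, s < n → StepF Γ s) (hpn : Poised (Γ n))
    (hpu : Poised (Γ u)) (hsub : Γ n ⊆ Γ u)
    (hful : ∀ α β : LTL AP, LTL.next (α.until_ β) ∈ Γ u →
      ∃ w, u < w ∧ w ≤ n ∧ β ∈ Γ w) :
    ∃ σ : ℕ → Set AP, Sat σ φ := by
  refine (loopPM Γ u n hu hsteps hpn hpu hsub).pm_sat
    (loopPM_ev Γ u n hu hsteps hpn hpu hsub hful) ?_
  show φ ∈ Γ (wseq u n 0)
  exact hφ

end Sound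

open Sound

open LTL in
/-- Soundness: if an LTL formula `φ` has a successful tableau
(a tableau for `φ`, built according to the rules, with at least one ticked
leaf), then `φ` is satisfiable. -/
theorem tableau_soundness {AP : Type} [DecidableEq AP] [Countable AP]
    (φ : LTL AP) (T : Tab AP) (hT : IsTableauFor φ T) (hs : T.Successful) :
    ∃ σ : ℕ → Set AP, Sat σ φ := by
  obtain ⟨hlbl, hv⟩ := hT
  obtain ⟨n, Γ, -, -, hroot, hsteps, hend⟩ := extract T [] hv hs
  simp only [List.length_nil] at hroot hsteps
  have hφ : φ ∈ Γ 0 := by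
    rw [hroot, hlbl]
    exact Finset.mem_singleton_self φ
  have hsteps' : ∀ s, s < n → StepF Γ s := fun s h => hsteps s (Nat.zero_le s) h
  rcases hend with hend | ⟨hpn, u, hu, hpu, hsub, hful⟩
  · exact empty_sat Γ n hφ hsteps' hend
  · exact loop_sat Γ u n hu hφ hsteps' hpn hpu hsub hful
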